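/- For every τ in the upper half-plane ℍ = {τ ∈ ℂ : Im τ > 0}, one has (1/(2πi)) · η′(τ)/η(τ) = 1/24 − ∑_{n=1}^∞ c_n e^{2πinτ}, where η(τ) = e^{iπτ/12} ∏_{n=1}^∞ (1 − e^{2πinτ}) is the Dedekind eta function and c_n denotes the number of subgroups of ℤ × ℤ of index n; in particular the series on the right converges. -/

import Mathlib

open Complex

/-- The Dedekind eta function `η(τ) = e^{iπτ/12} ∏_{n=1}^∞ (1 − e^{2πinτ})`. -/
noncomputable def dedekindEta (τ : ℂ) : ℂ :=
  Complex.exp (Real.pi * Complex.I * τ / 12) *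
    ∏' n : ℕ, (1 - Complex.exp (2 * Real.pi * Complex.I * (n + 1) * τ))

/-- `latticeIndexCount n` is the number of (additive) subgroups of `ℤ × ℤ`
of index `n`. -/
noncomputable def latticeIndexCount (n : ℕ) : ℕ :=
  Nat.card {H : AddSubgroup (ℤ × ℤ) // H.index = n}

section AuxA
open AddSubgroup
namespace Stmt8

lemma zmultiples_natAbs (g : ℤ) : zmultiples ((g.natAbs : ℤ)) = zmultiples g := by
  ext x
  rw [Int.mem_zmultiples_iff, Int.mem_zmultiples_iff, Int.natAbs_dvd]

lemma eq_zmultiples_index (B : AddSubgroup ℤ) (hB : B.index ≠ 0) :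
    B = zmultiples ((B.index : ℕ) : ℤ) := by
  obtain ⟨g, rfl⟩ := Int.subgroup_cyclic B
  have h1 : AddSubgroup.closure {g} = zmultiples g := (zmultiples_eq_closure g).symm
  rw [h1, Int.index_zmultiples, zmultiples_natAbs]

lemma index_injective {a b : ℕ} (h : zmultiples ((a:ℤ)) = zmultiples ((b:ℤ))) : a = b := by
  have := congrArg AddSubgroup.index h
  rwa [Int.index_zmultiples, Int.index_zmultiples, Int.natAbs_natCast, Int.natAbs_natCast] at this

/-- The key index formula : index of `H` is the product of the index of
`{x | (x,0) ∈ H}` in `ℤ` and the index of the image of `H` under the second projection. -/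
lemma index_eq_mul (H : AddSubgroup (ℤ × ℤ)) :
    H.index = (H.comap (AddMonoidHom.inl ℤ ℤ)).index * (H.map (AddMonoidHom.snd ℤ ℤ)).index := by
  set K := (AddMonoidHom.inl ℤ ℤ).range with hK
  have hker : (AddMonoidHom.snd ℤ ℤ).ker = K := by
    ext ⟨x, y⟩
    constructor
    · intro h
      have hy : y = 0 := h
      exact ⟨x, by simp [hy]⟩
    · rintro ⟨z, hz⟩
      have : y = 0 := by
        have := congrArg Prod.snd hz
        simpa using this.symm
      subst this
      exact AddMonoidHom.mem_ker.mpr rfl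
  have h1 : (H.map (AddMonoidHom.snd ℤ ℤ)).index = (H ⊔ K).index := by
    rw [AddSubgroup.index_map, hker,
      AddMonoidHom.range_eq_top_of_surjective _ (fun y => ⟨(0, y), rfl⟩),
      AddSubgroup.index_top, mul_one]
  have h2 : H.relIndex (H ⊔ K) = H.relIndex K := by
    rw [sup_comm, AddSubgroup.relIndex_sup_right]
  have h3 : H.relIndex K = (H.comap (AddMonoidHom.inl ℤ ℤ)).index :=
    (AddSubgroup.index_comap H (AddMonoidHom.inl ℤ ℤ)).symm
  rw [h1, ← h3, ← h2, AddSubgroup.relIndex_mul_index le_sup_left]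

/-- The sublattice of `ℤ × ℤ` generated by `(a, 0)` and `(b, d)`. -/
def Hsub (a d : ℕ) (b : ℤ) : AddSubgroup (ℤ × ℤ) where
  carrier := {p | (d : ℤ) ∣ p.2 ∧ ((a : ℤ) * d) ∣ (p.1 * d - b * p.2)}
  zero_mem' := ⟨dvd_zero _, by simp⟩
  add_mem' := by
    rintro ⟨x, y⟩ ⟨u, v⟩ ⟨h1, h2⟩ ⟨h3, h4⟩
    simp only [Set.mem_setOf_eq, Prod.mk_add_mk] at *
    refine ⟨dvd_add h1 h3, ?_⟩
    have : (x + u) * d - b * (y + v) = (x * d - b * y) + (u * d - b * v) := by ring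
    rw [this]
    exact dvd_add h2 h4
  neg_mem' := by
    rintro ⟨x, y⟩ ⟨h1, h2⟩
    simp only [Set.mem_setOf_eq, Prod.fst_neg, Prod.snd_neg] at *
    refine ⟨h1.neg_right, ?_⟩
    have : (-x) * d - b * (-y) = -(x * d - b * y) := by ring
    rw [this]
    exact h2.neg_right

lemma Hsub_mem {a d : ℕ} {b x y : ℤ} :
    (x, y) ∈ Hsub a d b ↔ (d : ℤ) ∣ y ∧ ((a : ℤ) * d) ∣ (x * d - b * y) := Iff.rfl

lemma mem_Hsub {a d : ℕ} (hd : 0 < d) (b x y : ℤ) :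
    (x, y) ∈ Hsub a d b ↔ ∃ s t : ℤ, x = s * a + t * b ∧ y = t * d := by
  rw [Hsub_mem]
  constructor
  · rintro ⟨⟨t, ht⟩, ⟨s, hs⟩⟩
    refine ⟨s, t, ?_, by rw [ht]; ring⟩
    have hd' : (d : ℤ) ≠ 0 := Int.natCast_ne_zero.mpr hd.ne'
    have : x * d = (s * a + t * b) * d := by rw [ht] at hs; nlinarith [hs]
    exact mul_right_cancel₀ hd' this
  · rintro ⟨s, t, rfl, rfl⟩
    exact ⟨⟨t, by ring⟩, ⟨s, by ring⟩⟩

lemma comap_Hsub {a d : ℕ} (hd : 0 < d) (b : ℤ) :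
    (Hsub a d b).comap (AddMonoidHom.inl ℤ ℤ) = zmultiples ((a : ℕ) : ℤ) := by
  ext x
  have hd' : (d : ℤ) ≠ 0 := Int.natCast_ne_zero.mpr hd.ne'
  rw [Int.mem_zmultiples_iff]
  constructor
  · intro hx
    have h2 := (Hsub_mem.mp hx).2
    simp only [mul_zero, sub_zero] at h2
    exact (mul_dvd_mul_iff_right hd').mp h2
  · rintro ⟨k, rfl⟩
    exact Hsub_mem.mpr ⟨dvd_zero _, ⟨k, by push_cast; ring⟩⟩

lemma map_Hsub {a d : ℕ} (b : ℤ) :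
    (Hsub a d b).map (AddMonoidHom.snd ℤ ℤ) = zmultiples ((d : ℕ) : ℤ) := by
  ext y
  rw [Int.mem_zmultiples_iff]
  constructor
  · rintro ⟨⟨u, v⟩, ⟨h1, -⟩, rfl⟩
    exact h1
  · rintro ⟨t, rfl⟩
    exact ⟨(t * b, d * t), Hsub_mem.mpr ⟨⟨t, by ring⟩, ⟨0, by push_cast; ring⟩⟩, rfl⟩

lemma index_Hsub {a d : ℕ} (hd : 0 < d) (b : ℤ) : (Hsub a d b).index = a * d := by
  rw [index_eq_mul, comap_Hsub hd, map_Hsub, Int.index_zmultiples, Int.index_zmultiples,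
    Int.natAbs_natCast, Int.natAbs_natCast]

lemma Hsub_congr_aux {a d : ℕ} {b b' x y : ℤ} (h : (a : ℤ) ∣ b - b')
    (hm : (x, y) ∈ Hsub a d b) : (x, y) ∈ Hsub a d b' := by
  obtain ⟨h1, h2⟩ := Hsub_mem.mp hm
  refine Hsub_mem.mpr ⟨h1, ?_⟩
  obtain ⟨t, ht⟩ := h1
  obtain ⟨k, hk⟩ := h
  obtain ⟨s, hs⟩ := h2
  refine ⟨s + k * t, ?_⟩
  have hb : b = b' + a * k := by linarith [hk]
  have : x * d - b' * y = (x * d - b * y) + (a * k) * y := by rw [hb]; ring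
  rw [this, hs, ht]; ring

lemma Hsub_congr {a d : ℕ} {b b' : ℤ} (h : (a : ℤ) ∣ b - b') : Hsub a d b = Hsub a d b' := by
  ext ⟨x, y⟩
  exact ⟨Hsub_congr_aux h, Hsub_congr_aux (by rw [show b' - b = -(b - b') by ring]; exact h.neg_right)⟩


lemma exists_Hsub (H : AddSubgroup (ℤ × ℤ)) (hH : H.index ≠ 0) :
    ∃ b : ℤ,
      H = Hsub (H.comap (AddMonoidHom.inl ℤ ℤ)).index (H.map (AddMonoidHom.snd ℤ ℤ)).index b := by
  set a := (H.comap (AddMonoidHom.inl ℤ ℤ)).index with ha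
  set d := (H.map (AddMonoidHom.snd ℤ ℤ)).index with hd
  have hkey := index_eq_mul H
  have ha0 : a ≠ 0 := fun h => hH (by rw [hkey, ← ha, h, zero_mul])
  have hd0 : d ≠ 0 := fun h => hH (by rw [hkey, ← hd, h, mul_zero])
  have hdpos : 0 < d := Nat.pos_of_ne_zero hd0
  have hA : H.comap (AddMonoidHom.inl ℤ ℤ) = zmultiples ((a : ℕ) : ℤ) :=
    eq_zmultiples_index _ ha0
  have hD : H.map (AddMonoidHom.snd ℤ ℤ) = zmultiples ((d : ℕ) : ℤ) :=
    eq_zmultiples_index _ hd0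
  have hdin : ((d : ℕ) : ℤ) ∈ H.map (AddMonoidHom.snd ℤ ℤ) := by
    rw [hD]; exact mem_zmultiples _
  obtain ⟨⟨x, y⟩, hxy, hy⟩ := hdin
  have hy' : y = (d : ℤ) := hy
  subst hy'
  refine ⟨x, ?_⟩
  ext ⟨u, v⟩
  constructor
  · intro hu
    have hv : v ∈ zmultiples ((d : ℕ) : ℤ) := by
      rw [← hD]; exact ⟨(u, v), hu, rfl⟩
    obtain ⟨t, ht⟩ := Int.mem_zmultiples_iff.mp hv
    obtain ⟨t, ht⟩ : ∃ t : ℤ, v = t * d := ⟨t, by rw [ht]; ring⟩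
    have hsub : (u - t * x, (0 : ℤ)) ∈ H := by
      have h1 := H.sub_mem hu (H.zsmul_mem hxy t)
      have heq : ((u, v) - t • (x, (d : ℤ))) = (u - t * x, (0 : ℤ)) := by
        rw [ht]; ext <;> simp [zsmul_eq_mul] <;> ring
      rwa [heq] at h1
    have hmem : u - t * x ∈ H.comap (AddMonoidHom.inl ℤ ℤ) := hsub
    rw [hA, Int.mem_zmultiples_iff] at hmem
    obtain ⟨s, hs⟩ := hmem
    exact (mem_Hsub hdpos x u v).mpr ⟨s, t, by linear_combination hs, ht⟩
  · intro hu
    obtain ⟨s, t, hu1, hv1⟩ := (mem_Hsub hdpos x u v).mp hu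
    have hain : (((a : ℕ) : ℤ), (0 : ℤ)) ∈ H := by
      have : ((a : ℕ) : ℤ) ∈ H.comap (AddMonoidHom.inl ℤ ℤ) := by
        rw [hA]; exact mem_zmultiples _
      exact this
    have h1 := H.add_mem (H.zsmul_mem hain s) (H.zsmul_mem hxy t)
    have heq : (s • (((a : ℕ) : ℤ), (0 : ℤ)) + t • (x, (d : ℤ))) = (u, v) := by
      rw [hu1, hv1]; ext <;> simp [zsmul_eq_mul] <;> ring
    rwa [heq] at h1

variable (n : ℕ) in
/-- Parametrization of index-`n` sublattices. -/
def Phi (x : (p : n.divisorsAntidiagonal) × ZMod (p : ℕ × ℕ).1) :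
    {H : AddSubgroup (ℤ × ℤ) // H.index = n} :=
  ⟨Hsub (x.1 : ℕ × ℕ).1 (x.1 : ℕ × ℕ).2 (x.2.val : ℤ), by
    obtain ⟨h1, h2⟩ := Nat.mem_divisorsAntidiagonal.mp x.1.2
    have hd : 0 < (x.1 : ℕ × ℕ).2 :=
      Nat.pos_of_ne_zero (fun h => h2 (by rw [← h1, h, mul_zero]))
    rw [index_Hsub hd, h1]⟩

lemma Phi_bijective (n : ℕ) (hn : n ≠ 0) : Function.Bijective (Phi n) := by
  constructor
  · rintro ⟨⟨⟨a, d⟩, hp⟩, b⟩ ⟨⟨⟨a', d'⟩, hp'⟩, b'⟩ h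
    have h : Hsub a d (b.val : ℤ) = Hsub a' d' (b'.val : ℤ) := congrArg Subtype.val h
    obtain ⟨h1, h2⟩ := Nat.mem_divisorsAntidiagonal.mp hp
    obtain ⟨h1', h2'⟩ := Nat.mem_divisorsAntidiagonal.mp hp'
    have hapos : 0 < a := Nat.pos_of_ne_zero (fun hh => h2 (by rw [← h1, hh, zero_mul]))
    have hdpos : 0 < d := Nat.pos_of_ne_zero (fun hh => h2 (by rw [← h1, hh, mul_zero]))
    have hapos' : 0 < a' := Nat.pos_of_ne_zero (fun hh => h2' (by rw [← h1', hh, zero_mul]))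
    have hdpos' : 0 < d' := Nat.pos_of_ne_zero (fun hh => h2' (by rw [← h1', hh, mul_zero]))
    have haa : a = a' := index_injective (by
      rw [← comap_Hsub hdpos (b.val : ℤ), ← comap_Hsub hdpos' (b'.val : ℤ), h])
    have hdd : d = d' := index_injective (by
      rw [← map_Hsub (a := a) (b.val : ℤ), ← map_Hsub (a := a') (b'.val : ℤ), h])
    subst haa hdd
    haveI : NeZero a := ⟨hapos.ne'⟩
    have hbmem : ((b.val : ℤ), (d : ℤ)) ∈ Hsub a d (b.val : ℤ) :=
      Hsub_mem.mpr ⟨dvd_refl _, ⟨0, by ring⟩⟩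
    rw [h] at hbmem
    obtain ⟨-, hdvd⟩ := Hsub_mem.mp hbmem
    have hdvd' : ((a : ℕ) : ℤ) ∣ ((b.val : ℤ) - (b'.val : ℤ)) := by
      have hd' : ((d : ℕ) : ℤ) ≠ 0 := Int.natCast_ne_zero.mpr hdpos.ne'
      have : ((a : ℕ) : ℤ) * d ∣ ((b.val : ℤ) - (b'.val : ℤ)) * d := by
        have heq : ((b.val : ℤ) - (b'.val : ℤ)) * d = (b.val : ℤ) * d - (b'.val : ℤ) * (d : ℤ) := by
          ring
        rw [heq]
        exact hdvd
      exact (mul_dvd_mul_iff_right hd').mp this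
    have hval : b.val = b'.val := by
      have hz : ((b.val : ℤ) - (b'.val : ℤ)) = 0 := by
        refine Int.eq_zero_of_dvd_of_natAbs_lt_natAbs hdvd' ?_
        have hb1 : b.val < a := ZMod.val_lt b
        have hb2 : b'.val < a := ZMod.val_lt b'
        rw [Int.natAbs_natCast]
        omega
      omega
    have hb : b = b' := ZMod.val_injective a hval
    subst hb
    rfl
  · rintro ⟨H, hH⟩
    have hH0 : H.index ≠ 0 := by rw [hH]; exact hn
    obtain ⟨b, hb⟩ := exists_Hsub H hH0
    set a := (H.comap (AddMonoidHom.inl ℤ ℤ)).index with ha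
    set d := (H.map (AddMonoidHom.snd ℤ ℤ)).index with hd
    have hkey := index_eq_mul H
    rw [← ha, ← hd] at hkey
    have hmem : ((a, d) : ℕ × ℕ) ∈ n.divisorsAntidiagonal :=
      Nat.mem_divisorsAntidiagonal.mpr ⟨by rw [← hkey, hH], hn⟩
    have ha0 : a ≠ 0 := fun hh => hH0 (by rw [hkey, hh, zero_mul])
    haveI : NeZero a := ⟨ha0⟩
    refine ⟨⟨⟨(a, d), hmem⟩, ((b : ZMod a))⟩, ?_⟩
    apply Subtype.ext
    show Hsub a d ((((b : ZMod a)).val : ℕ) : ℤ) = H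
    rw [hb]
    apply Hsub_congr
    have hz : ((((((b : ZMod a)).val : ℕ) : ℤ) - b : ℤ) : ZMod a) = 0 := by
      push_cast
      rw [show ((((b : ZMod a)).val : ℕ) : ZMod a) = (b : ZMod a) from ZMod.natCast_rightInverse _]
      ring
    exact (ZMod.intCast_zmod_eq_zero_iff_dvd _ _).mp hz

theorem card_eq (n : ℕ) (hn : n ≠ 0) :
    Nat.card {H : AddSubgroup (ℤ × ℤ) // H.index = n}
      = ∑ p ∈ n.divisorsAntidiagonal, p.1 := by
  haveI : ∀ p : n.divisorsAntidiagonal, NeZero ((p : ℕ × ℕ).1) := fun p =>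
    ⟨(Nat.ne_zero_of_mem_divisorsAntidiagonal p.2).1⟩
  rw [← Nat.card_eq_of_bijective (Phi n) (Phi_bijective n hn)]
  rw [Nat.card_eq_fintype_card, Fintype.card_sigma]
  simp_rw [ZMod.card]
  exact Finset.sum_coe_sort n.divisorsAntidiagonal Prod.fst

end Stmt8
end AuxA

section AuxB
open Real Filter
namespace Stmt8B

noncomputable def qt (n : ℕ) (z : ℂ) : ℂ := Complex.exp (2 * Real.pi * Complex.I * (n + 1) * z)

lemma norm_qt {n : ℕ} {z : ℂ} : ‖qt n z‖ = Real.exp (-(2 * Real.pi * (n + 1) * z.im)) := by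
  rw [qt, Complex.norm_exp]
  congr 1
  simp [Complex.mul_re, Complex.mul_im]

lemma qt_bound {c : ℝ} (hc : 0 < c) {n : ℕ} {z : ℂ} (hz : c < z.im) :
    ‖qt n z‖ ≤ Real.exp (-(2 * Real.pi * c)) ^ (n + 1) := by
  rw [norm_qt, ← Real.exp_nat_mul]
  apply Real.exp_le_exp.mpr
  push_cast
  have hπ : (0:ℝ) < Real.pi := Real.pi_pos
  have hn : (0:ℝ) ≤ (n:ℝ) + 1 := by positivity
  nlinarith [mul_nonneg (mul_nonneg (by positivity : (0:ℝ) ≤ 2 * Real.pi) hn)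
    (le_of_lt (sub_pos.mpr hz))]

lemma r_lt_one {c : ℝ} (hc : 0 < c) : Real.exp (-(2 * Real.pi * c)) < 1 := by
  apply Real.exp_lt_one_iff.mpr
  have := Real.pi_pos
  nlinarith

lemma r_nonneg {c : ℝ} : 0 ≤ Real.exp (-(2 * Real.pi * c)) := (Real.exp_pos _).le

lemma qt_lt_one {c : ℝ} (hc : 0 < c) {n : ℕ} {z : ℂ} (hz : c < z.im) : ‖qt n z‖ < 1 :=
  lt_of_le_of_lt (qt_bound hc hz)
    (pow_lt_one₀ r_nonneg (r_lt_one hc) (Nat.succ_ne_zero n))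

lemma one_sub_qt_ne {c : ℝ} (hc : 0 < c) {n : ℕ} {z : ℂ} (hz : c < z.im) :
    1 - qt n z ≠ 0 := by
  intro h
  have : ‖qt n z‖ = 1 := by
    have : qt n z = 1 := by linear_combination -h
    simp [this]
  exact absurd this (ne_of_lt (qt_lt_one hc hz))

lemma one_sub_qt_slit {c : ℝ} (hc : 0 < c) {n : ℕ} {z : ℂ} (hz : c < z.im) :
    1 - qt n z ∈ Complex.slitPlane := by
  rw [Complex.mem_slitPlane_iff]
  left
  have h1 : |(qt n z).re| ≤ ‖qt n z‖ := Complex.abs_re_le_norm _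
  have h2 : ‖qt n z‖ < 1 := qt_lt_one hc hz
  simp only [Complex.sub_re, Complex.one_re]
  cases abs_le.mp h1 with
  | intro hl hr => linarith

lemma norm_one_sub_qt_ge {c : ℝ} (hc : 0 < c) {n : ℕ} {z : ℂ} (hz : c < z.im) :
    1 - Real.exp (-(2 * Real.pi * c)) ≤ ‖1 - qt n z‖ := by
  have h1 : ‖(1:ℂ)‖ - ‖qt n z‖ ≤ ‖1 - qt n z‖ := norm_sub_norm_le _ _
  have h2 : ‖qt n z‖ ≤ Real.exp (-(2 * Real.pi * c)) :=
    le_trans (qt_bound hc hz)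
      (by simpa using pow_le_pow_of_le_one r_nonneg (r_lt_one hc).le (Nat.succ_le_succ (Nat.zero_le n)))
  simp only [norm_one] at h1
  linarith

lemma hasDerivAt_qt (n : ℕ) (z : ℂ) :
    HasDerivAt (qt n) (2 * Real.pi * Complex.I * (n + 1) * qt n z) z := by
  have h0 : HasDerivAt (fun w : ℂ => 2 * (Real.pi:ℂ) * Complex.I * ((n:ℂ) + 1) * w)
      (2 * (Real.pi:ℂ) * Complex.I * ((n:ℂ) + 1) * 1) z := (hasDerivAt_id z).const_mul _
  rw [mul_one] at h0
  have h2 := h0.cexp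
  have h3 : cexp (2 * (Real.pi:ℂ) * Complex.I * ((n:ℂ) + 1) * z) *
      (2 * (Real.pi:ℂ) * Complex.I * ((n:ℂ) + 1))
      = 2 * (Real.pi:ℂ) * Complex.I * ((n:ℂ) + 1) * qt n z := by rw [qt]; ring
  rw [h3] at h2
  exact h2

lemma hasDerivAt_log_one_sub_qt {c : ℝ} (hc : 0 < c) (n : ℕ) {z : ℂ} (hz : c < z.im) :
    HasDerivAt (fun w => Complex.log (1 - qt n w))
      (-(2 * Real.pi * Complex.I * (n + 1) * qt n z) / (1 - qt n z)) z := by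
  have h1 : HasDerivAt (fun w => 1 - qt n w) (-(2 * Real.pi * Complex.I * (n + 1) * qt n z)) z :=
    (hasDerivAt_qt n z).const_sub 1
  exact h1.clog (one_sub_qt_slit hc hz)



lemma summable_log {c : ℝ} (hc : 0 < c) {z : ℂ} (hz : c < z.im) :
    Summable (fun n : ℕ => Complex.log (1 - qt n z)) := by
  set r := Real.exp (-(2 * Real.pi * c)) with hrdef
  have hr1 : r < 1 := r_lt_one hc
  have hr0 : (0:ℝ) ≤ r := r_nonneg
  have hsum : Summable (fun n : ℕ => (r * (1 - r)⁻¹ / 2 + 1) * r ^ (n + 1)) := by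
    have h := (summable_geometric_of_lt_one hr0 hr1).mul_left ((r * (1 - r)⁻¹ / 2 + 1) * r)
    refine h.congr fun n => ?_
    rw [pow_succ]
    ring
  refine Summable.of_norm_bounded hsum fun n => ?_
  have hq : ‖qt n z‖ ≤ r ^ (n + 1) := qt_bound hc hz
  have hqr : ‖qt n z‖ ≤ r := le_trans hq
    (by simpa using pow_le_pow_of_le_one hr0 hr1.le (Nat.succ_le_succ (Nat.zero_le n)))
  have hq1 : ‖qt n z‖ < 1 := qt_lt_one hc hz
  have hlog : ‖Complex.log (1 - qt n z)‖
      ≤ ‖qt n z‖ ^ 2 * (1 - ‖qt n z‖)⁻¹ / 2 + ‖qt n z‖ := by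
    have := Complex.norm_log_one_add_le (z := -qt n z) (by simpa using hq1)
    simpa [sub_eq_add_neg] using this
  refine le_trans hlog ?_
  have hrp : r ^ (n+1) ≤ r := by
    simpa using pow_le_pow_of_le_one hr0 hr1.le (Nat.succ_le_succ (Nat.zero_le n))
  have e1 : ‖qt n z‖ ^ 2 ≤ r ^ (n + 1) * r := by
    nlinarith [norm_nonneg (qt n z)]
  have e2 : (1 - ‖qt n z‖)⁻¹ ≤ (1 - r)⁻¹ := by
    apply inv_anti₀ <;> linarith
  have e4 : ‖qt n z‖ ^ 2 * (1 - ‖qt n z‖)⁻¹ ≤ (r ^ (n + 1) * r) * (1 - r)⁻¹ := by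
    apply mul_le_mul e1 e2 (inv_nonneg.mpr (by linarith)) (by positivity)
  nlinarith [hq]

theorem etaLogDeriv (τ : ℂ) (hτ : 0 < τ.im) :
    deriv dedekindEta τ / dedekindEta τ
      = Real.pi * Complex.I / 12 + ∑' n : ℕ,
          (-(2 * Real.pi * Complex.I * ((n:ℂ) + 1) * qt n τ) / (1 - qt n τ)) := by
  set c : ℝ := τ.im / 2 with hcdef
  have hc : 0 < c := by simpa [hcdef] using half_pos hτ
  set t : Set ℂ := {z : ℂ | c < z.im} with htdef
  have hto : IsOpen t := isOpen_lt continuous_const Complex.continuous_im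
  have htc : IsPreconnected t := (convex_halfSpace_im_gt c).isPreconnected
  have hτt : τ ∈ t := by
    simp only [htdef, Set.mem_setOf_eq, hcdef]
    linarith
  set r := Real.exp (-(2 * Real.pi * c)) with hrdef
  have hr1 : r < 1 := r_lt_one hc
  have hr0 : (0:ℝ) ≤ r := r_nonneg
  set g : ℕ → ℂ → ℂ := fun n z => Complex.log (1 - qt n z) with hgdef
  set g' : ℕ → ℂ → ℂ :=
    fun n z => -(2 * Real.pi * Complex.I * ((n:ℂ) + 1) * qt n z) / (1 - qt n z) with hg'def
  set u : ℕ → ℝ := fun n => (2 * Real.pi * ((n:ℝ) + 1) * r ^ (n + 1)) / (1 - r) with hudef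
  have hu : Summable u := by
    have base : Summable (fun n : ℕ => ((n:ℝ)) * r ^ n) := by
      simpa using summable_pow_mul_geometric_of_norm_lt_one 1 (by
        rwa [Real.norm_eq_abs, _root_.abs_of_nonneg hr0])
    have base' : Summable (fun n : ℕ => ((n:ℝ) + 1) * r ^ (n + 1)) := by
      have := (summable_nat_add_iff 1).mpr base
      refine this.congr fun n => ?_
      push_cast
      ring
    have := base'.mul_left (2 * Real.pi / (1 - r))
    refine this.congr fun n => ?_
    simp only [hudef]
    field_simp
  have hg : ∀ (n : ℕ) (z : ℂ), z ∈ t → HasDerivAt (g n) (g' n z) z := fun n z hz =>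
    hasDerivAt_log_one_sub_qt hc n hz
  have hg' : ∀ (n : ℕ) (z : ℂ), z ∈ t → ‖g' n z‖ ≤ u n := by
    intro n z hz
    have hq : ‖qt n z‖ ≤ r ^ (n + 1) := qt_bound hc hz
    have hden : 1 - r ≤ ‖1 - qt n z‖ := norm_one_sub_qt_ge hc hz
    have hdenpos : (0:ℝ) < 1 - r := by linarith
    rw [hg'def]
    simp only
    rw [norm_div, norm_neg]
    have hnum : ‖2 * (Real.pi:ℂ) * Complex.I * ((n:ℂ) + 1) * qt n z‖
        = 2 * Real.pi * ((n:ℝ) + 1) * ‖qt n z‖ := by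
      have h1 : ‖((n:ℂ) + 1)‖ = (n:ℝ) + 1 := by
        rw [show ((n:ℂ) + 1) = ((n + 1 : ℕ) : ℂ) by push_cast; ring, Complex.norm_natCast]
        push_cast; ring
      have h2 : ‖(2 * (Real.pi:ℂ))‖ = 2 * Real.pi := by
        rw [show (2 * (Real.pi:ℂ)) = ((2 * Real.pi : ℝ) : ℂ) by push_cast; ring,
          Complex.norm_real, Real.norm_eq_abs, _root_.abs_of_nonneg (by positivity)]
      calc ‖2 * (Real.pi:ℂ) * Complex.I * ((n:ℂ) + 1) * qt n z‖
          = ‖(2 * (Real.pi:ℂ))‖ * ‖Complex.I‖ * ‖((n:ℂ) + 1)‖ * ‖qt n z‖ := by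
            simp [norm_mul]
        _ = 2 * Real.pi * ((n:ℝ) + 1) * ‖qt n z‖ := by rw [h2, Complex.norm_I, h1]; ring
    rw [hnum, hudef]
    apply div_le_div₀ (by positivity) ?_ hdenpos hden
    have : (0:ℝ) ≤ 2 * Real.pi * ((n:ℝ) + 1) := by positivity
    exact mul_le_mul_of_nonneg_left hq this
  have hgs : ∀ z ∈ t, Summable (fun n => g n z) := fun z hz => summable_log hc hz
  have hL : HasDerivAt (fun z => ∑' n, g n z) (∑' n, g' n τ) τ :=
    hasDerivAt_tsum_of_isPreconnected hu hto htc hg hg' hτt (hgs τ hτt) hτt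
  -- eta equals exponential of the log-sum on t
  have hprod : ∀ z ∈ t, dedekindEta z
      = Complex.exp (Real.pi * Complex.I * z / 12 + ∑' n, g n z) := by
    intro z hz
    have key := Complex.cexp_tsum_eq_tprod (ι := ℕ)
      (f := fun n => 1 - qt n z)
      (fun n => one_sub_qt_ne hc hz)
      (hgs z hz)
    have keyz := key
    rw [dedekindEta, Complex.exp_add]
    congr 1
    exact keyz.symm
  have hlin : HasDerivAt (fun z : ℂ => Real.pi * Complex.I * z / 12)
      ((Real.pi : ℂ) * Complex.I / 12) τ := by
    have h0 : HasDerivAt (fun z : ℂ => (Real.pi : ℂ) * Complex.I * z)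
        ((Real.pi : ℂ) * Complex.I * 1) τ := (hasDerivAt_id τ).const_mul _
    rw [mul_one] at h0
    exact h0.div_const 12
  have hF : HasDerivAt (fun z : ℂ => Real.pi * Complex.I * z / 12 + ∑' n, g n z)
      ((Real.pi : ℂ) * Complex.I / 12 + ∑' n, g' n τ) τ := hlin.add hL
  have hD := hF.cexp
  have hev : dedekindEta =ᶠ[nhds τ]
      (fun z => Complex.exp (Real.pi * Complex.I * z / 12 + ∑' n, g n z)) := by
    filter_upwards [hto.mem_nhds hτt] with z hz
    exact hprod z hz
  have hderiv : deriv dedekindEta τ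
      = Complex.exp (Real.pi * Complex.I * τ / 12 + ∑' n, g n τ)
        * ((Real.pi : ℂ) * Complex.I / 12 + ∑' n, g' n τ) := by
    rw [hev.deriv_eq, hD.deriv]
  have hval : dedekindEta τ = Complex.exp (Real.pi * Complex.I * τ / 12 + ∑' n, g n τ) :=
    hprod τ hτt
  rw [hderiv, hval, mul_comm, mul_div_assoc, div_self (Complex.exp_ne_zero _), mul_one]

end Stmt8B
end AuxB

section AuxC
namespace Stmt8C

/-- sum of divisors, as a sum over the divisor antidiagonal -/
def cn (m : ℕ) : ℕ := ∑ p ∈ m.divisorsAntidiagonal, p.1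

variable {Q : ℂ}

private lemma norm_pow_lt (hQ : ‖Q‖ < 1) (n : ℕ) : ‖Q ^ (n + 1)‖ < 1 := by
  rw [norm_pow]
  exact pow_lt_one₀ (norm_nonneg _) hQ (Nat.succ_ne_zero n)

noncomputable def w (Q : ℂ) (p : ℕ × ℕ) : ℂ := ((p.1 : ℂ) + 1) * Q ^ ((p.1 + 1) * (p.2 + 1))

lemma summable_w (hQ : ‖Q‖ < 1) : Summable (w Q) := by
  have h1 : Summable (fun n : ℕ => ((n : ℝ) + 1) * ‖Q‖ ^ (n + 1)) := by
    have base : Summable (fun n : ℕ => ((n : ℝ)) * ‖Q‖ ^ n) := by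
      simpa using summable_pow_mul_geometric_of_norm_lt_one 1 (by
        rwa [Real.norm_eq_abs, _root_.abs_of_nonneg (norm_nonneg Q)])
    have := (summable_nat_add_iff 1).mpr base
    refine this.congr fun n => ?_
    push_cast; ring
  have h2 : Summable (fun n : ℕ => ‖Q‖ ^ n) := summable_geometric_of_lt_one (norm_nonneg _) hQ
  have hs : Summable (fun p : ℕ × ℕ => (((p.1 : ℝ) + 1) * ‖Q‖ ^ (p.1 + 1)) * ‖Q‖ ^ p.2) :=
    h1.mul_of_nonneg h2 (fun n => by positivity) (fun n => by positivity)
  refine Summable.of_norm_bounded hs fun p => ?_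
  have hnorm : ‖w Q p‖ = ((p.1 : ℝ) + 1) * ‖Q‖ ^ ((p.1 + 1) * (p.2 + 1)) := by
    rw [w, norm_mul, norm_pow]
    congr 1
    rw [show ((p.1 : ℂ) + 1) = ((p.1 + 1 : ℕ) : ℂ) by push_cast; ring, Complex.norm_natCast]
    push_cast; ring
  rw [hnorm]
  have hsplit : ‖Q‖ ^ ((p.1 + 1) * (p.2 + 1)) = ‖Q‖ ^ (p.1 + 1) * ‖Q‖ ^ ((p.1 + 1) * p.2) := by
    rw [← pow_add]
    congr 1
    ring
  have hle : ‖Q‖ ^ ((p.1 + 1) * p.2) ≤ ‖Q‖ ^ p.2 :=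
    pow_le_pow_of_le_one (norm_nonneg _) hQ.le (Nat.le_mul_of_pos_left _ (Nat.succ_pos _))
  rw [hsplit]
  have hp1 : (0:ℝ) ≤ (p.1 : ℝ) + 1 := by positivity
  calc ((p.1 : ℝ) + 1) * (‖Q‖ ^ (p.1 + 1) * ‖Q‖ ^ ((p.1 + 1) * p.2))
      ≤ ((p.1 : ℝ) + 1) * (‖Q‖ ^ (p.1 + 1) * ‖Q‖ ^ p.2) := by
        apply mul_le_mul_of_nonneg_left _ hp1
        exact mul_le_mul_of_nonneg_left hle (by positivity)
    _ = ((p.1 : ℝ) + 1) * ‖Q‖ ^ (p.1 + 1) * ‖Q‖ ^ p.2 := by ring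

lemma hasSum_w_row (hQ : ‖Q‖ < 1) (n : ℕ) :
    HasSum (fun k => w Q (n, k)) (((n : ℂ) + 1) * Q ^ (n + 1) / (1 - Q ^ (n + 1))) := by
  have hgeo := hasSum_geometric_of_norm_lt_one (norm_pow_lt hQ n)
  have h2 := hgeo.mul_left (((n : ℂ) + 1) * Q ^ (n + 1))
  have key : (fun k : ℕ => (((n : ℂ) + 1) * Q ^ (n + 1)) * (Q ^ (n + 1)) ^ k)
      = fun k => w Q (n, k) := by
    funext k
    rw [w, pow_mul, pow_succ']
    ring
  rw [div_eq_mul_inv, mul_assoc]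
  have h3 := key ▸ h2
  rw [← mul_assoc]
  exact h3

lemma fiber_zero_empty : IsEmpty ((fun p : ℕ × ℕ => (p.1 + 1) * (p.2 + 1)) ⁻¹' {0} : Set (ℕ × ℕ)) := by
  constructor
  rintro ⟨⟨i, j⟩, h⟩
  simp only [Set.mem_preimage, Set.mem_singleton_iff] at h
  rcases Nat.mul_eq_zero.mp h with h' | h' <;> exact Nat.succ_ne_zero _ h' 

def fiberEquiv (m : ℕ) :
    ((m + 1).divisorsAntidiagonal : Set (ℕ × ℕ)) ≃
      ((fun p : ℕ × ℕ => (p.1 + 1) * (p.2 + 1)) ⁻¹' {m + 1} : Set (ℕ × ℕ)) where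
  toFun y := ⟨(y.1.1 - 1, y.1.2 - 1), by
    have hy := Nat.mem_divisorsAntidiagonal.mp y.2
    have h1 : y.1.1 ≠ 0 := (Nat.ne_zero_of_mem_divisorsAntidiagonal y.2).1
    have h2 : y.1.2 ≠ 0 := (Nat.ne_zero_of_mem_divisorsAntidiagonal y.2).2
    simp only [Set.mem_preimage, Set.mem_singleton_iff]
    have e1 : y.1.1 - 1 + 1 = y.1.1 := by omega
    have e2 : y.1.2 - 1 + 1 = y.1.2 := by omega
    rw [e1, e2]
    exact hy.1⟩
  invFun x := ⟨(x.1.1 + 1, x.1.2 + 1), by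
    have hx := x.2
    simp only [Set.mem_preimage, Set.mem_singleton_iff] at hx
    exact Finset.mem_coe.mpr (Nat.mem_divisorsAntidiagonal.mpr ⟨hx, Nat.succ_ne_zero m⟩)⟩
  left_inv y := by
    have h1 : y.1.1 ≠ 0 := (Nat.ne_zero_of_mem_divisorsAntidiagonal y.2).1
    have h2 : y.1.2 ≠ 0 := (Nat.ne_zero_of_mem_divisorsAntidiagonal y.2).2
    apply Subtype.ext
    show ((y.1.1 - 1 + 1 : ℕ), (y.1.2 - 1 + 1 : ℕ)) = y.1
    rw [Prod.ext_iff]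
    exact ⟨by simp; omega, by simp; omega⟩
  right_inv x := by
    apply Subtype.ext
    show ((x.1.1 + 1 - 1 : ℕ), (x.1.2 + 1 - 1 : ℕ)) = x.1
    rw [Prod.ext_iff]
    exact ⟨by simp, by simp⟩

lemma F_succ (hQ : ‖Q‖ < 1) (m : ℕ) :
    (∑' x : ((fun p : ℕ × ℕ => (p.1 + 1) * (p.2 + 1)) ⁻¹' {m + 1} : Set (ℕ × ℕ)), w Q x)
      = ((cn (m + 1) : ℕ) : ℂ) * Q ^ (m + 1) := by
  rw [← Equiv.tsum_eq (fiberEquiv m) (fun x => w Q x)]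
  have hterm : ∀ y : ((m + 1).divisorsAntidiagonal : Set (ℕ × ℕ)),
      w Q ((fiberEquiv m) y) = ((y.1.1 : ℂ)) * Q ^ (m + 1) := by
    intro y
    have hy := Nat.mem_divisorsAntidiagonal.mp y.2
    have h1 : y.1.1 ≠ 0 := (Nat.ne_zero_of_mem_divisorsAntidiagonal y.2).1
    have h2 : y.1.2 ≠ 0 := (Nat.ne_zero_of_mem_divisorsAntidiagonal y.2).2
    have e1 : y.1.1 - 1 + 1 = y.1.1 := by omega
    have e2 : y.1.2 - 1 + 1 = y.1.2 := by omega
    show ((((y.1.1 - 1 : ℕ)) : ℂ) + 1) * Q ^ ((y.1.1 - 1 + 1) * (y.1.2 - 1 + 1))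
      = ((y.1.1 : ℂ)) * Q ^ (m + 1)
    rw [e1, e2, hy.1]
    congr 1
    rw [show (((y.1.1 - 1 : ℕ)) : ℂ) + 1 = (((y.1.1 - 1 + 1 : ℕ)) : ℂ) by push_cast; ring, e1]
  rw [tsum_congr hterm]
  rw [tsum_congr (fun y => rfl), Finset.tsum_subtype' ((m+1).divisorsAntidiagonal)
    (fun p => ((p.1 : ℂ)) * Q ^ (m + 1))]
  rw [← Finset.sum_mul, cn]
  push_cast
  ring

theorem lambert (hQ : ‖Q‖ < 1) :
    Summable (fun n : ℕ => ((cn (n + 1) : ℕ) : ℂ) * Q ^ (n + 1)) ∧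
    (∑' n : ℕ, ((n : ℂ) + 1) * Q ^ (n + 1) / (1 - Q ^ (n + 1)))
      = ∑' n : ℕ, ((cn (n + 1) : ℕ) : ℂ) * Q ^ (n + 1) := by
  have hw := summable_w hQ
  have hW := hw.hasSum
  have hfib := hW.tsum_fiberwise (fun p : ℕ × ℕ => (p.1 + 1) * (p.2 + 1))
  set F : ℕ → ℂ :=
    fun m => ∑' x : ((fun p : ℕ × ℕ => (p.1 + 1) * (p.2 + 1)) ⁻¹' {m} : Set (ℕ × ℕ)), w Q x
    with hFdef
  have hF0 : F 0 = 0 := by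
    haveI := fiber_zero_empty
    exact tsum_empty
  have hFsum : Summable F := hfib.summable
  have hFsucc : ∀ m, F (m + 1) = ((cn (m + 1) : ℕ) : ℂ) * Q ^ (m + 1) := fun m => F_succ hQ m
  have hsummable : Summable (fun n : ℕ => ((cn (n + 1) : ℕ) : ℂ) * Q ^ (n + 1)) := by
    have := (summable_nat_add_iff 1).mpr hFsum
    exact this.congr fun n => hFsucc n
  refine ⟨hsummable, ?_⟩
  have hLHS : (∑' n : ℕ, ((n : ℂ) + 1) * Q ^ (n + 1) / (1 - Q ^ (n + 1))) = ∑' p, w Q p := by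
    rw [hw.tsum_prod' (fun n => (hasSum_w_row hQ n).summable)]
    exact tsum_congr fun n => ((hasSum_w_row hQ n).tsum_eq).symm
  have hsplit : ∑' p, w Q p = F 0 + ∑' n, F (n + 1) := by
    rw [← hfib.tsum_eq]
    exact hFsum.tsum_eq_zero_add
  rw [hLHS, hsplit, hF0, zero_add]
  exact tsum_congr fun n => hFsucc n

end Stmt8C
end AuxC

/-- For every `τ` in the upper half-plane,
`(1/(2πi)) η′(τ)/η(τ) = 1/24 − ∑_{n=1}^∞ c_n e^{2πinτ}`, where `c_n` is the
number of subgroups of `ℤ × ℤ` of index `n`; in particular the series on the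
right converges. -/
theorem stmt_8 (τ : ℂ) (hτ : 0 < τ.im) :
    Summable (fun n : ℕ => (latticeIndexCount (n + 1) : ℂ) *
      Complex.exp (2 * Real.pi * Complex.I * (n + 1) * τ)) ∧
    (1 / (2 * Real.pi * Complex.I)) * (deriv dedekindEta τ / dedekindEta τ)
      = 1 / 24 - ∑' n : ℕ, (latticeIndexCount (n + 1) : ℂ) *
          Complex.exp (2 * Real.pi * Complex.I * (n + 1) * τ) := by
  have hτ2 : 0 < τ.im / 2 := half_pos hτ
  have hzz : τ.im / 2 < τ.im := by linarith
  set Q : ℂ := Complex.exp (2 * Real.pi * Complex.I * τ) with hQdef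
  have hqt : ∀ n : ℕ, Stmt8B.qt n τ = Q ^ (n + 1) := by
    intro n
    rw [Stmt8B.qt, hQdef, ← Complex.exp_nat_mul]
    congr 1
    push_cast
    ring
  have hQnorm : ‖Q‖ < 1 := by
    have h := Stmt8B.qt_lt_one hτ2 hzz (n := 0)
    rwa [hqt 0, pow_one] at h
  have hlam := Stmt8C.lambert hQnorm
  have hcount : ∀ n : ℕ, latticeIndexCount (n + 1) = Stmt8C.cn (n + 1) := fun n =>
    Stmt8.card_eq (n + 1) (Nat.succ_ne_zero n)
  have hser : (fun n : ℕ => (latticeIndexCount (n + 1) : ℂ) *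
      Complex.exp (2 * Real.pi * Complex.I * (n + 1) * τ))
      = fun n : ℕ => ((Stmt8C.cn (n + 1) : ℕ) : ℂ) * Q ^ (n + 1) := by
    funext n
    rw [hcount n,
      show Complex.exp (2 * Real.pi * Complex.I * ((n : ℂ) + 1) * τ) = Stmt8B.qt n τ from rfl,
      hqt n]
  constructor
  · rw [hser]
    exact hlam.1
  · rw [Stmt8B.etaLogDeriv τ hτ, mul_add]
    have hπ : ((Real.pi : ℂ)) ≠ 0 := Complex.ofReal_ne_zero.mpr Real.pi_ne_zero
    have hI : Complex.I ≠ 0 := Complex.I_ne_zero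
    have hA : (1 / (2 * (Real.pi : ℂ) * Complex.I)) * ((Real.pi : ℂ) * Complex.I / 12)
        = 1 / 24 := by
      field_simp
      ring
    rw [hA, ← tsum_mul_left]
    have hterm : ∀ n : ℕ, (1 / (2 * (Real.pi : ℂ) * Complex.I)) *
        (-(2 * Real.pi * Complex.I * ((n : ℂ) + 1) * Stmt8B.qt n τ) / (1 - Stmt8B.qt n τ))
        = -(((n : ℂ) + 1) * Q ^ (n + 1) / (1 - Q ^ (n + 1))) := by
      intro n
      have hne : (1 : ℂ) - Q ^ (n + 1) ≠ 0 := by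
        rw [← hqt n]
        exact Stmt8B.one_sub_qt_ne hτ2 hzz
      rw [hqt n]
      field_simp
    rw [tsum_congr hterm, tsum_neg, hlam.2, hser]
    ring
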